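/- Let X be a PSCA(v, t, λ) and let w, w′ be distinct symbols of [v]. Let d_w be the distribution vector of w in X and d′_w the distribution vector of w in the PSCA X′ obtained by deleting the symbol w′ from every permutation of X. Then for 0 ≤ k ≤ v−2, the partial sum δ_k = Σ_{i=0}^{k} (d′_w(i) − d_w(i)) satisfies 0 ≤ δ_k ≤ d′_w(k). -/

import Mathlib

open scoped Classical

/-- A permutation `π` of `[v]` covers a sequence `s` of `t` distinct symbols if the
symbols appear in `π` in the given order, i.e. `π⁻¹(s 0) < ⋯ < π⁻¹(s (t-1))`. -/
def Covers {v t : ℕ} (π : Equiv.Perm (Fin v)) (s : Fin t → Fin v) : Prop :=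
  StrictMono fun i => π.symm (s i)

/-- `X` is a perfect sequence covering array PSCA(v, t, λ): every sequence of `t`
distinct symbols of `[v]` is covered by exactly `λ` permutations of `X` (with multiplicity). -/
def IsPSCA (v t l : ℕ) (X : Multiset (Equiv.Perm (Fin v))) : Prop :=
  ∀ s : Fin t → Fin v, Function.Injective s → X.countP (fun π => Covers π s) = l

/-- `dcount v X w j` is the number of permutations `π` in `X` (with multiplicity)
such that `π(j) = w`. -/
noncomputable def dcount (v : ℕ) (X : Multiset (Equiv.Perm (Fin v))) (w : Fin v) (j : ℕ) : ℕ :=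
  X.countP fun π => ∃ p : Fin v, (p : ℕ) = j ∧ π p = w

/-- Deleting the symbol `w'` from a permutation of `Fin (n+1)`, relabelling the remaining
symbols to `Fin n` in an order-preserving way and keeping their relative order. -/
def deleteSym {n : ℕ} (w' : Fin (n + 1)) (π : Equiv.Perm (Fin (n + 1))) : Equiv.Perm (Fin n) :=
  Equiv.removeNone ((finSuccEquiv' (π.symm w')).symm.trans (π.trans (finSuccEquiv' w')))

private lemma countP_mono' {α : Type*} (s : Multiset α) (p q : α → Prop)
    [DecidablePred p] [DecidablePred q]
    (h : ∀ a, p a → q a) : s.countP p ≤ s.countP q := by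
  induction s using Multiset.induction with
  | empty => simp
  | cons a s ih =>
    simp only [Multiset.countP_cons]
    by_cases hp : p a
    · rw [if_pos hp, if_pos (h a hp)]; omega
    · rw [if_neg hp]; split <;> omega

private lemma countP_split' {α : Type*} (s : Multiset α) (p q : α → Prop)
    [DecidablePred p] [DecidablePred q] :
    s.countP p = s.countP (fun a => p a ∧ q a) + s.countP (fun a => p a ∧ ¬ q a) := by
  induction s using Multiset.induction with
  | empty => simp
  | cons a s ih =>
    simp only [Multiset.countP_cons, ih]
    by_cases hp : p a <;> by_cases hq : q a <;> simp [hp, hq] <;> omega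

private lemma sum_countP_eq {α : Type*} (s : Multiset α) (g : α → ℕ) (k : ℕ) :
    ∑ i ∈ Finset.range (k + 1), s.countP (fun a => g a = i)
      = s.countP (fun a => g a ≤ k) := by
  induction k with
  | zero =>
    rw [Nat.zero_add, Finset.sum_range_one]
    exact Multiset.countP_congr rfl (fun a _ => propext (by omega))
  | succ k ih =>
    rw [Finset.sum_range_succ, ih,
      countP_split' s (fun a => g a ≤ k + 1) (fun a => g a ≤ k)]
    congr 1
    · exact Multiset.countP_congr rfl (fun a _ => propext (by omega))
    · exact Multiset.countP_congr rfl (fun a _ => propext (by omega))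

private lemma pos_key {n : ℕ} (π : Equiv.Perm (Fin (n + 1))) (w w' : Fin (n + 1))
    (hww' : w ≠ w') (w'' : Fin n) (hrelabel : finSuccEquiv' w' w = some w'') :
    (((deleteSym w' π).symm w'' : ℕ) ≤ (π.symm w : ℕ)) ∧
      ((π.symm w : ℕ) ≤ ((deleteSym w' π).symm w'' : ℕ) + 1) := by
  set a := π.symm w' with ha
  set b := π.symm w with hb
  have hba : b ≠ a := fun h => hww' (by
    have := congrArg π h
    simpa [hb, ha] using this)
  obtain ⟨m, hm, hval⟩ :
      ∃ m : Fin n, finSuccEquiv' a b = some m ∧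
        ((m : ℕ) ≤ (b : ℕ) ∧ (b : ℕ) ≤ (m : ℕ) + 1) := by
    rcases lt_or_gt_of_ne (fun h : (b : ℕ) = (a : ℕ) => hba (Fin.ext h)) with h | h
    · have hbn : (b : ℕ) < n := lt_of_lt_of_le h (Nat.lt_succ_iff.mp a.isLt)
      refine ⟨⟨(b : ℕ), hbn⟩, ?_, le_refl _, by simp⟩
      have hcast : Fin.castSucc (⟨(b : ℕ), hbn⟩ : Fin n) = b := by ext; simp
      conv_lhs => rw [← hcast]
      exact finSuccEquiv'_below (by rw [Fin.lt_def]; simpa using h)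
    · have hb0 : 0 < (b : ℕ) := Nat.pos_of_ne_zero (fun h0 => by omega)
      have hbn : (b : ℕ) - 1 < n := by omega
      refine ⟨⟨(b : ℕ) - 1, hbn⟩, ?_, by simp, by simp; omega⟩
      have hsucc : Fin.succ (⟨(b : ℕ) - 1, hbn⟩ : Fin n) = b := by
        ext; simp; omega
      conv_lhs => rw [← hsucc]
      exact finSuccEquiv'_above (by rw [Fin.le_def]; simpa using by omega)
  have hpos : (deleteSym w' π).symm w'' = m := by
    have key : ((finSuccEquiv' a).symm.trans (π.trans (finSuccEquiv' w'))).symm (some w'')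
        = some m := by
      simp only [Equiv.symm_trans_apply, Equiv.symm_symm]
      have h1 : (finSuccEquiv' w').symm (some w'') = w := by
        rw [← hrelabel]; simp
      rw [h1, ← hb, ← hm]
    have := Equiv.removeNone_some
      (e := ((finSuccEquiv' a).symm.trans (π.trans (finSuccEquiv' w'))).symm)
      (x := w'') ⟨m, key⟩
    rw [key] at this
    have h2 : (deleteSym w' π).symm w''
        = Equiv.removeNone ((finSuccEquiv' a).symm.trans (π.trans (finSuccEquiv' w'))).symm w'' := by
      simp [deleteSym, ha]
    rw [h2]
    exact Option.some_injective _ this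
  rw [hpos]
  exact hval

theorem stmt10 (n t l : ℕ) (ht : 2 ≤ t) (htv : t ≤ n + 1)
    (X : Multiset (Equiv.Perm (Fin (n + 1)))) (hX : IsPSCA (n + 1) t l X)
    (w w' : Fin (n + 1)) (hww' : w ≠ w')
    (w'' : Fin n) (hrelabel : finSuccEquiv' w' w = some w'')
    (k : ℕ) (hk : k ≤ n - 1) :
    0 ≤ ∑ i ∈ Finset.range (k + 1),
        ((dcount n (X.map (deleteSym w')) w'' i : ℤ) - (dcount (n + 1) X w i : ℤ)) ∧
      ∑ i ∈ Finset.range (k + 1),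
        ((dcount n (X.map (deleteSym w')) w'' i : ℤ) - (dcount (n + 1) X w i : ℤ)) ≤
        (dcount n (X.map (deleteSym w')) w'' k : ℤ) := by
  -- positions
  set g : Equiv.Perm (Fin (n + 1)) → ℕ := fun π => (π.symm w : ℕ) with hg
  set g' : Equiv.Perm (Fin (n + 1)) → ℕ := fun π => ((deleteSym w' π).symm w'' : ℕ) with hg'
  have hkey : ∀ π : Equiv.Perm (Fin (n + 1)), g' π ≤ g π ∧ g π ≤ g' π + 1 :=
    fun π => pos_key π w w' hww' w'' hrelabel
  -- rewrite dcount
  have hd : ∀ i, dcount (n + 1) X w i = X.countP (fun π => g π = i) := by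
    intro i
    refine Multiset.countP_congr rfl (fun π _ => propext ?_)
    constructor
    · rintro ⟨p, hp, hpw⟩
      simp [hg, ← hpw, ← hp]
    · rintro h
      exact ⟨π.symm w, h, by simp⟩
  have hd' : ∀ i, dcount n (X.map (deleteSym w')) w'' i = X.countP (fun π => g' π = i) := by
    intro i
    rw [dcount, Multiset.countP_map, ← Multiset.countP_eq_card_filter]
    refine Multiset.countP_congr rfl (fun π _ => propext ?_)
    constructor
    · rintro ⟨p, hp, hpw⟩
      simp [hg', ← hpw, ← hp]
    · rintro h
      exact ⟨(deleteSym w' π).symm w'', h, by simp⟩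
  have hsum : ∑ i ∈ Finset.range (k + 1), dcount (n + 1) X w i
      = X.countP (fun π => g π ≤ k) := by
    rw [← sum_countP_eq X g k]; exact Finset.sum_congr rfl (fun i _ => hd i)
  have hsum' : ∑ i ∈ Finset.range (k + 1), dcount n (X.map (deleteSym w')) w'' i
      = X.countP (fun π => g' π ≤ k) := by
    rw [← sum_countP_eq X g' k]; exact Finset.sum_congr rfl (fun i _ => hd' i)
  have hBA : X.countP (fun π => g π ≤ k) ≤ X.countP (fun π => g' π ≤ k) :=
    countP_mono' X _ _ (fun π h => le_trans (hkey π).1 h)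
  have hAC : X.countP (fun π => g' π ≤ k)
      ≤ X.countP (fun π => g π ≤ k) + X.countP (fun π => g' π = k) := by
    rw [countP_split' X (fun π => g' π ≤ k) (fun π => g π ≤ k)]
    gcongr
    · exact countP_mono' X _ _ (fun π h => h.2)
    · refine countP_mono' X _ _ (fun π h => ?_)
      have := hkey π
      omega
  have hsplit : ∑ i ∈ Finset.range (k + 1),
      ((dcount n (X.map (deleteSym w')) w'' i : ℤ) - (dcount (n + 1) X w i : ℤ))
      = (X.countP (fun π => g' π ≤ k) : ℤ) - (X.countP (fun π => g π ≤ k) : ℤ) := by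
    rw [Finset.sum_sub_distrib, ← Nat.cast_sum, ← Nat.cast_sum, hsum, hsum']
  rw [hsplit, hd' k]
  constructor
  · have := hBA; omega
  · have := hAC; omega
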